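/- Let y_1,…,y_n ∈ ℂ^m and let C be a closed cone of Hermitian matrices (closed under multiplication by positive scalars). Suppose X* minimizes log det X over positive definite X ∈ C subject to (1/n)·Σ_{i=1}^n y_i^H X^{-1} y_i ≤ 1. Then R* = X*/m minimizes f(R) = (1/n)·Σ_{i=1}^n y_i^H R^{-1} y_i + log det R over positive definite R ∈ C. -/

import Mathlib

open Matrix ComplexOrder

section aux
variable {m : ℕ}

private lemma real_smul_mat (t : ℝ) (X : Matrix (Fin m) (Fin m) ℂ) :
    t • X = (t : ℂ) • X := by
  ext i j; simp [Complex.real_smul]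

private lemma posDef_real_smul {t : ℝ} (ht : 0 < t) {X : Matrix (Fin m) (Fin m) ℂ}
    (hX : X.PosDef) : (t • X).PosDef := by
  rw [real_smul_mat]
  refine PosDef.of_dotProduct_mulVec_pos ?_ (fun x hx => ?_)
  · rw [IsHermitian, conjTranspose_smul, hX.1.eq]
    congr 1
    simp
  · have hq := hX.dotProduct_mulVec_pos hx
    have : star x ⬝ᵥ ((t : ℂ) • X) *ᵥ x = (t : ℂ) * (star x ⬝ᵥ X *ᵥ x) := by
      rw [smul_mulVec, dotProduct_smul, smul_eq_mul]
    rw [Complex.lt_def] at hq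
    have hre : 0 < (star x ⬝ᵥ X *ᵥ x).re := by simpa using hq.1
    have him : (star x ⬝ᵥ X *ᵥ x).im = 0 := by simpa using hq.2.symm
    rw [this, Complex.lt_def]
    constructor
    · simp only [Complex.mul_re, Complex.ofReal_re, Complex.ofReal_im, Complex.zero_re, him]
      nlinarith [mul_pos ht hre]
    · simp [Complex.mul_im, him]

private lemma inv_real_smul {t : ℝ} (ht : 0 < t) {X : Matrix (Fin m) (Fin m) ℂ}
    (hX : X.PosDef) : (t • X)⁻¹ = t⁻¹ • X⁻¹ := by
  rw [real_smul_mat, real_smul_mat]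
  have hd : IsUnit X.det := hX.det_pos.ne'.isUnit
  have ht' : (t : ℂ) ≠ 0 := by exact_mod_cast ht.ne'
  have hL : ((t : ℂ)⁻¹ • X⁻¹) * ((t : ℂ) • X) = 1 := by
    rw [Matrix.smul_mul, Matrix.mul_smul, smul_smul, inv_mul_cancel₀ ht', one_smul,
      Matrix.nonsing_inv_mul _ hd]
  rw [Complex.ofReal_inv]
  exact Matrix.inv_eq_left_inv hL

private lemma quad_real_smul (t : ℝ) (z : ℂ) (v : Fin m → ℂ) (M : Matrix (Fin m) (Fin m) ℂ) :
    (star v ⬝ᵥ ((t : ℝ) • M) *ᵥ v).re = t * (star v ⬝ᵥ M *ᵥ v).re := by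
  rw [real_smul_mat, smul_mulVec, dotProduct_smul, smul_eq_mul, Complex.re_ofReal_mul]

private lemma logdet_real_smul {t : ℝ} (ht : 0 < t) {X : Matrix (Fin m) (Fin m) ℂ}
    (hX : X.PosDef) : Real.log ((t • X).det.re) = m * Real.log t + Real.log X.det.re := by
  have : (t • X).det = (t : ℂ) ^ m * X.det := by
    rw [real_smul_mat, det_smul]; simp
  rw [this]
  have : ((t : ℂ) ^ m * X.det).re = t ^ m * X.det.re := by
    rw [← Complex.ofReal_pow, Complex.re_ofReal_mul]
  have hdr : (0:ℝ) < X.det.re := by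
    have h := hX.det_pos
    rw [Complex.lt_def] at h
    simpa using h.1
  rw [this, Real.log_mul (by positivity) hdr.ne', Real.log_pow]
end aux

theorem stmt4 {m n : ℕ} (hm : 0 < m) (hn : 0 < n)
    (y : Fin n → Fin m → ℂ) (C : Set (Matrix (Fin m) (Fin m) ℂ))
    (hherm : ∀ X ∈ C, X.IsHermitian) (hclosed : IsClosed C)
    (hcone : ∀ X ∈ C, ∀ t : ℝ, 0 < t → t • X ∈ C)
    (Xstar : Matrix (Fin m) (Fin m) ℂ) (hXC : Xstar ∈ C) (hXpd : Xstar.PosDef)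
    (hXfeas : (1 / n : ℝ) * ∑ i, (star (y i) ⬝ᵥ Xstar⁻¹ *ᵥ y i).re ≤ 1)
    (hXopt : ∀ X ∈ C, X.PosDef →
      (1 / n : ℝ) * ∑ i, (star (y i) ⬝ᵥ X⁻¹ *ᵥ y i).re ≤ 1 →
      Real.log Xstar.det.re ≤ Real.log X.det.re) :
    ((1 / m : ℝ) • Xstar ∈ C) ∧ ((1 / m : ℝ) • Xstar).PosDef ∧
    ∀ R ∈ C, R.PosDef →
      (1 / n : ℝ) * ∑ i, (star (y i) ⬝ᵥ ((1 / m : ℝ) • Xstar)⁻¹ *ᵥ y i).re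
          + Real.log ((1 / m : ℝ) • Xstar).det.re
        ≤ (1 / n : ℝ) * ∑ i, (star (y i) ⬝ᵥ R⁻¹ *ᵥ y i).re
          + Real.log R.det.re := by
  have hm' : (0:ℝ) < m := by exact_mod_cast hm
  have hminv : (0:ℝ) < 1 / m := by positivity
  -- abbreviation
  set α : Matrix (Fin m) (Fin m) ℂ → ℝ :=
    fun R => (1 / n : ℝ) * ∑ i, (star (y i) ⬝ᵥ R⁻¹ *ᵥ y i).re with hα
  -- scaling of α
  have hαsmul : ∀ (t : ℝ), 0 < t → ∀ (X : Matrix (Fin m) (Fin m) ℂ), X.PosDef →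
      α (t • X) = t⁻¹ * α X := by
    intro t ht X hX
    simp only [hα, inv_real_smul ht hX]
    rw [Finset.mul_sum, Finset.mul_sum, Finset.mul_sum]
    congr 1; ext i
    rw [quad_real_smul t⁻¹ 0]
    ring
  -- nonnegativity of α
  have hαnonneg : ∀ (X : Matrix (Fin m) (Fin m) ℂ), X.PosDef → 0 ≤ α X := by
    intro X hX
    apply mul_nonneg (by positivity)
    exact Finset.sum_nonneg fun i _ => hX.inv.posSemidef.re_dotProduct_nonneg _
  -- α Xstar = 1
  have haone : α Xstar = 1 := by
    by_contra h
    have ha1 : α Xstar < 1 := lt_of_le_of_ne hXfeas h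
    have ha0 : 0 ≤ α Xstar := hαnonneg _ hXpd
    set t : ℝ := (α Xstar + 1) / 2 with htdef
    have ht0 : 0 < t := by positivity
    have ht1 : t < 1 := by simp only [htdef]; linarith
    have hat : α Xstar ≤ t := by simp only [htdef]; linarith
    have hmem : t • Xstar ∈ C := hcone _ hXC t ht0
    have hpd : (t • Xstar).PosDef := posDef_real_smul ht0 hXpd
    have hfeas : α (t • Xstar) ≤ 1 := by
      rw [hαsmul t ht0 _ hXpd]
      rw [inv_mul_le_iff₀ ht0, mul_one]
      exact hat
    have := hXopt _ hmem hpd hfeas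
    rw [logdet_real_smul ht0 hXpd] at this
    have hlt : Real.log t < 0 := Real.log_neg ht0 ht1
    nlinarith
  refine ⟨hcone _ hXC _ hminv, posDef_real_smul hminv hXpd, ?_⟩
  intro R hRC hRpd
  -- b := α R > 0
  have hb0 : 0 < α R := by
    rcases lt_or_eq_of_le (hαnonneg R hRpd) with h | h
    · exact h
    -- α R = 0 → all y i = 0 → α Xstar = 0, contradiction
    exfalso
    have hy : ∀ i, y i = 0 := by
      intro i
      by_contra hyi
      have hpos := hRpd.inv.re_dotProduct_pos hyi
      have hnonneg : ∀ j ∈ Finset.univ, 0 ≤ (star (y j) ⬝ᵥ R⁻¹ *ᵥ y j).re :=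
        fun j _ => hRpd.inv.posSemidef.re_dotProduct_nonneg _
      have hsum0 : ∑ j, (star (y j) ⬝ᵥ R⁻¹ *ᵥ y j).re = 0 := by
        have hninv : (0:ℝ) < 1 / n := by positivity
        have := h.symm
        simp only [hα] at this
        nlinarith [this]
      have h0 := (Finset.sum_eq_zero_iff_of_nonneg hnonneg).mp hsum0 i (Finset.mem_univ i)
      have hpos' : 0 < (star (y i) ⬝ᵥ R⁻¹ *ᵥ y i).re := hpos
      linarith
    have : α Xstar = 0 := by
      simp only [hα]
      simp [hy]
    rw [haone] at this
    norm_num at this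
  set b : ℝ := α R with hbdef
  -- feasibility of b • R and optimality
  have hmem : b • R ∈ C := hcone _ hRC b hb0
  have hpd : (b • R).PosDef := posDef_real_smul hb0 hRpd
  have hfeas : α (b • R) ≤ 1 := by
    rw [hαsmul b hb0 _ hRpd, inv_mul_cancel₀ hb0.ne']
  have hopt := hXopt _ hmem hpd hfeas
  rw [logdet_real_smul hb0 hRpd] at hopt
  -- compute LHS pieces
  have hLα : α ((1 / m : ℝ) • Xstar) = m := by
    rw [hαsmul _ hminv _ hXpd, haone]
    field_simp
  have hLdet : Real.log ((1 / m : ℝ) • Xstar).det.re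
      = m * Real.log (1 / m) + Real.log Xstar.det.re :=
    logdet_real_smul hminv hXpd
  -- key scalar inequality: m * log (b/m) ≤ b - m
  have hkey : (m:ℝ) * (Real.log b - Real.log m) ≤ b - m := by
    have h1 : Real.log (b / m) ≤ b / m - 1 := Real.log_le_sub_one_of_pos (by positivity)
    rw [Real.log_div hb0.ne' hm'.ne'] at h1
    have := mul_le_mul_of_nonneg_left h1 hm'.le
    calc (m:ℝ) * (Real.log b - Real.log m) ≤ m * (b / m - 1) := this
      _ = b - m := by field_simp
  show α ((1 / m : ℝ) • Xstar) + Real.log ((1 / m : ℝ) • Xstar).det.re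
      ≤ α R + Real.log R.det.re
  rw [hLα, hLdet]
  have hlogm : Real.log (1 / m) = - Real.log m := by
    rw [one_div, Real.log_inv]
  rw [hlogm]
  nlinarith [hopt, hkey]
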